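/- Discrete Wronskian composition identity: for functions f₁,…,fₙ (f₁ nowhere zero appropriately nondegenerate) and h₁,…,hₘ, Wr( Wr(f₁,…,fₙ,h₁),…, Wr(f₁,…,fₙ,hₘ) )(x) = (∏_{s=0}^{m-2} Wr(Tf₁,…,Tfₙ)(x+s)) · Wr(f₁,…,fₙ,h₁,…,hₘ)(x). -/

import Mathlib

/-- The discrete Wronskian of functions `f 0, …, f (n-1)`. -/
noncomputable def dWr {n : ℕ} (f : Fin n → ℂ → ℂ) (x : ℂ) : ℂ :=
  Matrix.det (Matrix.of fun i j : Fin n => f i (x + (j : ℕ)))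


open Matrix Finset
noncomputable def dWs {R : Type*} [CommRing R] {n : ℕ} (F : Fin n → ℕ → R) (t : ℕ) : R :=
  Matrix.det (Matrix.of fun i j : Fin n => F i (t + (j : ℕ)))

lemma dWs_smul_col {R : Type*} [CommRing R] {n : ℕ} (c : ℕ → R) (D : Fin n → ℕ → R) (t : ℕ) :
    dWs (fun i s => c s * D i s) t = (∏ j ∈ range n, c (t + j)) * dWs D t := by
  rw [dWs, dWs, ← Fin.prod_univ_eq_prod_range (fun j => c (t + j))]
  exact Matrix.det_mul_row (fun j : Fin n => c (t + (j : ℕ))) (Matrix.of fun i j => D i (t + (j:ℕ)))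

lemma snoc_succ {α : Sort*} {N : ℕ} (a : Fin (N+1) → α) (b : α) (i : Fin (N+1)) :
    (Fin.snoc a b : Fin (N+2) → α) i.succ
      = (Fin.snoc (fun j : Fin N => a j.succ) b : Fin (N+1) → α) i := by
  induction i using Fin.lastCases with
  | last => simp [Fin.succ_last]
  | cast j => rw [Fin.succ_castSucc, Fin.snoc_castSucc, Fin.snoc_castSucc]

lemma snoc_zero' {α : Sort*} {N : ℕ} (a : Fin (N+1) → α) (b : α) :
    (Fin.snoc a b : Fin (N+2) → α) 0 = a 0 := by
  have : (0 : Fin (N+2)) = Fin.castSucc (0 : Fin (N+1)) := rfl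
  rw [this, Fin.snoc_castSucc]

lemma append_zero {N M : ℕ} {α : Sort*} (F : Fin (N+1) → α) (H : Fin (M+1) → α) :
    (Fin.append F H) (0 : Fin (N+1+M+1)) = F 0 := by
  have : (0 : Fin (N+1+M+1)) = (Fin.castAdd (M+1) (0 : Fin (N+1)) : Fin (N+1+(M+1))) := by
    apply Fin.ext; rfl
  rw [this, Fin.append_left]

lemma append_succ {N M : ℕ} {α : Sort*} (F : Fin (N+1) → α) (H : Fin M → α)
    (i : Fin (N+M)) :
    (Fin.append F H) (Fin.cast (by omega) i.succ : Fin (N+1+M))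
      = Fin.append (fun j : Fin N => F j.succ) H i := by
  induction i using Fin.addCases with
  | left j =>
      rw [Fin.append_left]
      have : (Fin.cast (by omega) (Fin.castAdd M j).succ : Fin (N+1+M))
          = Fin.castAdd M j.succ := by
        apply Fin.ext; simp
      rw [this, Fin.append_left]
  | right j =>
      rw [Fin.append_right]
      have : (Fin.cast (by omega) (Fin.natAdd N j).succ : Fin (N+1+M))
          = Fin.natAdd (N+1) j := by
        apply Fin.ext; simp; omega
      rw [this, Fin.append_right]

lemma append_lt' {a b : ℕ} {α : Sort*} (F : Fin a → α) (H : Fin b → α) (i : Fin (a+b))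
    (j : Fin a) (h : (i : ℕ) = (j : ℕ)) : Fin.append F H i = F j := by
  have hij : i = Fin.castAdd b j := Fin.ext h
  rw [hij, Fin.append_left]

lemma append_ge' {a b : ℕ} {α : Sort*} (F : Fin a → α) (H : Fin b → α) (i : Fin (a+b))
    (j : Fin b) (h : (i : ℕ) = a + (j : ℕ)) : Fin.append F H i = H j := by
  have hij : i = Fin.natAdd a j := Fin.ext (by simpa using h)
  rw [hij, Fin.append_right]

lemma append_succ' {N m : ℕ} {α : Sort*} (F : Fin (N+1) → α) (H : Fin (m+1) → α)
    (i : Fin (N+1+m)) :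
    (Fin.append F H) (i.succ : Fin (N+1+m+1)) =
      Fin.append (fun j : Fin N => F j.succ) H (Fin.cast (by omega) i) := by
  have h : (i.succ : Fin (N+1+m+1))
      = (Fin.cast (by omega) ((Fin.cast (by omega : N+1+m = N+(m+1)) i).succ) : Fin (N+1+(m+1))) := by
    apply Fin.ext; simp
  rw [h, append_succ]

lemma dWs_cast {R : Type*} [CommRing R] {K K' : ℕ} (h : K = K') (F : Fin K' → ℕ → R) (t : ℕ) :
    dWs F t = dWs (fun i : Fin K => F (Fin.cast h i)) t := by
  rw [dWs, dWs]
  rw [← Matrix.det_submatrix_equiv_self (finCongr h) (Matrix.of fun i j : Fin K' => F i (t + (j:ℕ)))]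
  apply congrArg Matrix.det
  ext i j
  simp [finCongr]

lemma scalar_eq (N m t : ℕ) (f0 : ℕ → ℂ) :
    (∏ j ∈ range (m+1), ∏ i ∈ range (N+2), f0 (t + j + i))
      = (∏ s ∈ range m, ∏ j ∈ range (N+1), f0 (t + s + 1 + j)) *
        ∏ j ∈ range (N+1+m+1), f0 (t + j) := by
  have lhs1 : ∀ j, (∏ i ∈ range (N+2), f0 (t + j + i))
      = (∏ i ∈ range (N+1), f0 (t + j + i)) * f0 (t + j + (N+1)) := fun j =>
    Finset.prod_range_succ _ _
  simp only [lhs1]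
  rw [Finset.prod_mul_distrib]
  rw [Finset.prod_range_succ' (fun j => ∏ i ∈ range (N+1), f0 (t + j + i)) m]
  have e1 : (∏ j ∈ range (N+1+m+1), f0 (t + j))
      = (∏ j ∈ range (N+1), f0 (t + j)) * ∏ j ∈ range (m+1), f0 (t + (N+1+j)) := by
    rw [show N+1+m+1 = (N+1)+(m+1) by ring, Finset.prod_range_add]
  rw [e1]
  have e2 : ∀ s ∈ range m, (∏ j ∈ range (N+1), f0 (t + s + 1 + j))
      = ∏ i ∈ range (N+1), f0 (t + (s+1) + i) := by
    intro s _
    rfl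
  rw [Finset.prod_congr rfl e2]
  have e3 : (∏ j ∈ range (m+1), f0 (t + j + (N+1)))
      = ∏ j ∈ range (m+1), f0 (t + (N+1+j)) := by
    apply Finset.prod_congr rfl
    intro j _
    congr 1
    ring
  have e4 : (∏ i ∈ range (N+1), f0 (t + 0 + i)) = ∏ j ∈ range (N+1), f0 (t + j) := rfl
  rw [e3, e4]
  ring
/-- Discrete Wronskian reduction identity. -/
theorem dWs_reduction {k : ℕ} (F : Fin (k + 1) → ℕ → ℂ) (hF : ∀ s, F 0 s ≠ 0) (t : ℕ) :
    dWs F t = (∏ j ∈ range (k + 1), F 0 (t + j)) *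
      dWs (fun (i : Fin k) s => F i.succ (s + 1) / F 0 (s + 1) - F i.succ s / F 0 s) t := by
  classical
  set B : Matrix (Fin (k+1)) (Fin (k+1)) ℂ :=
    Matrix.of (fun i j : Fin (k+1) => F i (t + (j:ℕ)) / F 0 (t + (j:ℕ))) with hB
  have h1 : dWs F t = (∏ j ∈ range (k + 1), F 0 (t + j)) * B.det := by
    have : (Matrix.of fun i j : Fin (k+1) => F i (t + (j : ℕ)))
        = Matrix.of (fun i j : Fin (k+1) => F 0 (t + (j:ℕ)) * B i j) := by
      ext i j
      simp only [Matrix.of_apply, hB]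
      exact (mul_div_cancel₀ _ (hF _)).symm
    rw [dWs, this, Matrix.det_mul_row]
    rw [Fin.prod_univ_eq_prod_range (fun j => F 0 (t + j))]
  set C : Matrix (Fin (k+1)) (Fin (k+1)) ℂ :=
    Matrix.of (fun i j : Fin (k+1) =>
      Fin.cases (B i 0) (fun j' : Fin k => B i j'.succ - B i j'.castSucc) j) with hC
  have h2 : B.det = C.det := by
    apply Matrix.det_eq_of_forall_col_eq_smul_add_pred (fun _ => (1:ℂ))
    · intro i; simp [hC]
    · intro i j
      simp only [hC, Matrix.of_apply, Fin.cases_succ]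
      ring
  have hC00 : C 0 0 = 1 := by
    simp only [hC, Matrix.of_apply, Fin.cases_zero, hB]
    simpa using div_self (hF (t + 0))
  have hC0succ : ∀ j' : Fin k, C 0 j'.succ = 0 := by
    intro j'
    simp only [hC, Matrix.of_apply, Fin.cases_succ, hB]
    rw [div_self (hF _), div_self (hF _)]
    ring
  have h3 : C.det = (C.submatrix Fin.succ (Fin.succAbove 0)).det := by
    rw [Matrix.det_succ_row_zero, Finset.sum_eq_single 0]
    · simp [hC00]
    · intro j _ hj
      obtain ⟨j', rfl⟩ := Fin.exists_succ_eq.2 hj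
      simp [hC0succ j']
    · intro habs
      exact absurd (Finset.mem_univ _) habs
  have h4 : (C.submatrix Fin.succ (Fin.succAbove 0)).det
      = dWs (fun (i : Fin k) s => F i.succ (s + 1) / F 0 (s + 1) - F i.succ s / F 0 s) t := by
    rw [dWs]
    apply congrArg Matrix.det
    ext i j
    simp only [Matrix.submatrix_apply, Fin.succAbove_zero, hC, Matrix.of_apply, Fin.cases_succ,
      hB]
    have e1 : ((j.succ : Fin (k+1)) : ℕ) = (j : ℕ) + 1 := rfl
    have e2 : ((j.castSucc : Fin (k+1)) : ℕ) = (j : ℕ) := rfl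
    rw [e1, e2, show t + ((j:ℕ)+1) = t + (j:ℕ) + 1 by ring]
  rw [h1, h2, h3, h4]

def Sstmt (N : ℕ) : Prop := ∀ (m : ℕ) (F : Fin N → ℕ → ℂ) (H : Fin (m+1) → ℕ → ℂ) (t : ℕ),
  dWs (fun i s => dWs (Fin.snoc F (H i)) s) t
    = (∏ s ∈ range m, dWs (fun j s' => F j (s' + 1)) (t + s)) * dWs (Fin.append F H) t

theorem step_cond (N : ℕ) (IH : Sstmt N) (m : ℕ) (F : Fin (N+1) → ℕ → ℂ)
    (hF : ∀ s, F 0 s ≠ 0) (H : Fin (m+1) → ℕ → ℂ) (t : ℕ) :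
    dWs (fun i s => dWs (Fin.snoc F (H i)) s) t
      = (∏ s ∈ range m, dWs (fun j s' => F j (s' + 1)) (t + s)) * dWs (Fin.append F H) t := by
  set G : Fin N → ℕ → ℂ := fun i s => F i.succ (s+1) / F 0 (s+1) - F i.succ s / F 0 s with hG
  set H' : Fin (m+1) → ℕ → ℂ := fun i s => H i (s+1) / F 0 (s+1) - H i s / F 0 s with hH'
  set c : ℕ → ℂ := fun s => ∏ j ∈ range (N+2), F 0 (s+j) with hc
  -- Claim 1: inner reduction
  have claim1 : ∀ (i : Fin (m+1)) (s : ℕ),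
      dWs (Fin.snoc F (H i)) s = c s * dWs (Fin.snoc G (H' i)) s := by
    intro i s
    have hz : ∀ s', (Fin.snoc F (H i) : Fin (N+2) → ℕ → ℂ) 0 s' ≠ 0 := by
      intro s'
      rw [snoc_zero']
      exact hF s'
    rw [dWs_reduction (Fin.snoc F (H i)) hz s]
    congr 1
    · apply congrArg (fun (X : Fin (N+1) → ℕ → ℂ) => dWs X s)
      funext i' s'
      rw [snoc_zero', snoc_succ]
      induction i' using Fin.lastCases with
      | last => simp [hH']
      | cast j => simp [hG]
  -- factor out columns
  have claim2 : dWs (fun i s => dWs (Fin.snoc F (H i)) s) t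
      = (∏ j ∈ range (m+1), c (t+j)) * dWs (fun i s => dWs (Fin.snoc G (H' i)) s) t := by
    have : (fun (i : Fin (m+1)) s => dWs (Fin.snoc F (H i)) s)
        = fun i s => c s * dWs (Fin.snoc G (H' i)) s := by
      funext i s; exact claim1 i s
    rw [this, dWs_smul_col]
  -- Claim 3: shifted wronskian reduction
  have claim3 : ∀ s' : ℕ, dWs (fun j s => F j (s+1)) (t+s')
      = (∏ j ∈ range (N+1), F 0 (t+s'+j+1)) * dWs (fun j s => G j (s+1)) (t+s') := by
    intro s'
    have hz : ∀ s'', (fun (j : Fin (N+1)) s => F j (s+1)) 0 s'' ≠ 0 := fun s'' => hF _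
    rw [dWs_reduction (fun j s => F j (s+1)) hz (t+s')]
  -- Claim 4: big wronskian reduction
  have claim4 : dWs (Fin.append F H) t
      = (∏ j ∈ range (N+1+m+1), F 0 (t+j)) * dWs (Fin.append G H') t := by
    have hz : ∀ s', (Fin.append F H) (0 : Fin (N+1+m+1)) s' ≠ 0 := by
      rw [append_zero]; exact hF
    rw [dWs_reduction (k := N+1+m) ((Fin.append F H : Fin (N+1+(m+1)) → ℕ → ℂ) : Fin (N+1+m+1) → ℕ → ℂ) hz t]
    congr 1
    · have hcast : N+1+m = N+(m+1) := by omega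
      rw [dWs_cast hcast (Fin.append G H') t]
      apply congrArg (fun (X : Fin (N+1+m) → ℕ → ℂ) => dWs X t)
      funext i s
      rw [append_zero]
      by_cases hi : (i : ℕ) < N
      · have e1 : Fin.append F H (i.succ : Fin (N+1+m+1)) = F ⟨(i:ℕ)+1, by omega⟩ :=
          append_lt' _ _ _ _ (by simp)
        have e2 : Fin.append G H' (Fin.cast hcast i) = G ⟨(i:ℕ), hi⟩ :=
          append_lt' _ _ _ _ (by simp)
        rw [e1, e2]
        simp only [hG]
        rfl
      · have e1 : Fin.append F H (i.succ : Fin (N+1+m+1)) = H ⟨(i:ℕ)-N, by omega⟩ :=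
          append_ge' _ _ _ _ (by simp; omega)
        have e2 : Fin.append G H' (Fin.cast hcast i) = H' ⟨(i:ℕ)-N, by omega⟩ :=
          append_ge' _ _ _ _ (by simp; omega)
        rw [e1, e2]
  rw [claim2, IH m G H' t, claim4]
  have rhsprod : (∏ s ∈ range m, dWs (fun j s' => F j (s' + 1)) (t + s))
      = ∏ s ∈ range m, ((∏ j ∈ range (N+1), F 0 (t+s+j+1)) * dWs (fun j s' => G j (s'+1)) (t+s)) := by
    apply Finset.prod_congr rfl
    intro s _
    rw [claim3 s]
  rw [rhsprod, Finset.prod_mul_distrib]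
  have key : (∏ j ∈ range (m+1), c (t+j))
      = (∏ s ∈ range m, ∏ j ∈ range (N+1), F 0 (t+s+j+1)) * ∏ j ∈ range (N+1+m+1), F 0 (t+j) := by
    have := scalar_eq N m t (F 0)
    simp only [hc]
    have l1 : (∏ j ∈ range (m+1), ∏ i ∈ range (N+2), F 0 (t+j+i))
        = ∏ j ∈ range (m+1), ∏ i ∈ range (N+2), F 0 ((t+j)+i) := rfl
    have l2 : (∏ s ∈ range m, ∏ j ∈ range (N+1), F 0 (t+s+j+1))
        = ∏ s ∈ range m, ∏ j ∈ range (N+1), F 0 (t+s+1+j) := by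
      apply Finset.prod_congr rfl; intro s _
      apply Finset.prod_congr rfl; intro j _
      congr 1; ring
    rw [l2]
    exact this
  rw [key]
  ring

theorem base_case : Sstmt 0 := by
  intro m F H t
  have hinner : ∀ (i : Fin (m+1)) (s : ℕ), dWs (Fin.snoc F (H i)) s = H i s := by
    intro i s
    rw [dWs, Matrix.det_fin_one]
    show (Fin.snoc F (H i) : Fin 1 → ℕ → ℂ) 0 (s + ((0 : Fin 1) : ℕ)) = H i s
    have h0 : (0 : Fin 1) = Fin.last 0 := rfl
    rw [h0, Fin.snoc_last]
    simp
  have h1 : (fun (i : Fin (m+1)) s => dWs (Fin.snoc F (H i)) s) = H := by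
    funext i s; exact hinner i s
  rw [h1]
  have h2 : ∀ s ∈ range m, dWs (fun (j : Fin 0) s' => F j (s' + 1)) (t + s) = 1 := by
    intro s _
    rw [dWs]
    exact Matrix.det_fin_zero
  rw [Finset.prod_congr rfl h2, Finset.prod_const_one, one_mul]
  rw [dWs_cast (by omega : m+1 = 0+(m+1)) (Fin.append F H) t]
  apply congrArg (fun (X : Fin (m+1) → ℕ → ℂ) => dWs X t)
  funext i
  exact (append_ge' F H _ i (by simp)).symm

lemma dWs_map {R S : Type*} [CommRing R] [CommRing S] (φ : R →+* S) {n : ℕ}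
    (F : Fin n → ℕ → R) (t : ℕ) :
    φ (dWs F t) = dWs (fun i k => φ (F i k)) t := by
  rw [dWs, dWs, RingHom.map_det]
  rfl

lemma dWs_eval {n : ℕ} (ε : ℂ) (F : Fin n → ℕ → Polynomial ℂ) (t : ℕ) :
    Polynomial.eval ε (dWs F t) = dWs (fun i k => Polynomial.eval ε (F i k)) t :=
  dWs_map (Polynomial.evalRingHom ε) F t

theorem step_full (N : ℕ) (IH : Sstmt N) : Sstmt (N+1) := by
  intro m F H t
  classical
  set Fe : ℂ → Fin (N+1) → ℕ → ℂ := fun ε i k => if i = 0 then F i k + ε else F i k with hFe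
  set Fp : Fin (N+1) → ℕ → Polynomial ℂ :=
    fun i k => if i = 0 then Polynomial.C (F i k) + Polynomial.X else Polynomial.C (F i k) with hFp
  set Hp : Fin (m+1) → ℕ → Polynomial ℂ := fun i k => Polynomial.C (H i k) with hHp
  set P : Polynomial ℂ :=
    dWs (fun i s => dWs (Fin.snoc Fp (Hp i)) s) t
      - (∏ s ∈ range m, dWs (fun j s' => Fp j (s' + 1)) (t + s)) * dWs (Fin.append Fp Hp) t
    with hP
  have hFeval : ∀ ε : ℂ, (fun i k => Polynomial.eval ε (Fp i k)) = Fe ε := by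
    intro ε; funext i k
    by_cases h : i = 0 <;> simp [hFp, hFe, h]
  have hev : ∀ ε : ℂ, Polynomial.eval ε P
      = dWs (fun i s => dWs (Fin.snoc (Fe ε) (H i)) s) t
        - (∏ s ∈ range m, dWs (fun j s' => (Fe ε) j (s' + 1)) (t + s)) *
            dWs (Fin.append (Fe ε) H) t := by
    intro ε
    have inner_eq : ∀ (i : Fin (m+1)),
        (fun i' k => Polynomial.eval ε ((Fin.snoc Fp (Hp i) : Fin (N+2) → ℕ → Polynomial ℂ) i' k))
          = (Fin.snoc (Fe ε) (H i) : Fin (N+2) → ℕ → ℂ) := by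
      intro i; funext i' k
      induction i' using Fin.lastCases with
      | last => simp [Fin.snoc_last, hHp]
      | cast j =>
          rw [Fin.snoc_castSucc, Fin.snoc_castSucc]
          exact congrFun (congrFun (hFeval ε) j) k
    have append_eq :
        (fun i' k => Polynomial.eval ε ((Fin.append Fp Hp : Fin (N+1+(m+1)) → ℕ → Polynomial ℂ) i' k))
          = (Fin.append (Fe ε) H : Fin (N+1+(m+1)) → ℕ → ℂ) := by
      funext i' k
      induction i' using Fin.addCases with
      | left j =>
          rw [Fin.append_left, Fin.append_left]
          exact congrFun (congrFun (hFeval ε) j) k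
      | right j => rw [Fin.append_right, Fin.append_right]; simp [hHp]
    rw [hP, Polynomial.eval_sub, Polynomial.eval_mul, Polynomial.eval_prod]
    congr 1
    · rw [dWs_eval]
      apply congrArg (fun (X : Fin (m+1) → ℕ → ℂ) => dWs X t)
      funext i s
      rw [dWs_eval]
      apply congrArg (fun (X : Fin (N+2) → ℕ → ℂ) => dWs X s)
      exact inner_eq i
    · congr 1
      · apply Finset.prod_congr rfl
        intro s _
        rw [dWs_eval]
        apply congrArg (fun (X : Fin (N+1) → ℕ → ℂ) => dWs X (t+s))
        funext j s'
        exact congrFun (congrFun (hFeval ε) j) (s'+1)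
      · rw [dWs_eval]
        apply congrArg (fun (X : Fin (N+1+(m+1)) → ℕ → ℂ) => dWs X t)
        exact append_eq
  have hroots : {ε : ℂ | P.IsRoot ε}.Infinite := by
    have hsub : (Set.range fun k : ℕ => -(F 0 k))ᶜ ⊆ {ε : ℂ | P.IsRoot ε} := by
      intro ε hε
      have hz : ∀ k, (Fe ε) 0 k ≠ 0 := by
        intro k hk
        simp only [hFe, if_pos rfl] at hk
        exact hε ⟨k, by linear_combination -hk⟩
      show P.IsRoot ε
      rw [Polynomial.IsRoot.def, hev ε]
      exact sub_eq_zero_of_eq (step_cond N IH m (Fe ε) hz H t)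
    have hcompl : ((Set.range fun k : ℕ => -(F 0 k))ᶜ : Set ℂ).Infinite := by
      have : Uncountable ℂ := Complex.ofReal_injective.uncountable
      by_contra hfin
      rw [Set.not_infinite] at hfin
      have hcnt : (Set.univ : Set ℂ).Countable := by
        have := (Set.countable_range fun k : ℕ => -(F 0 k)).union hfin.countable
        simpa using this
      exact Set.not_countable_univ hcnt
    exact hcompl.mono hsub
  have hP0 : P = 0 := Polynomial.eq_zero_of_infinite_isRoot P hroots
  have h0 := hev 0
  rw [hP0] at h0
  simp only [Polynomial.eval_zero] at h0
  have hFe0 : Fe 0 = F := by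
    funext i k
    by_cases h : i = 0 <;> simp [hFe, h]
  rw [hFe0] at h0
  exact (sub_eq_zero.mp h0.symm)

theorem Sall : ∀ N, Sstmt N
  | 0 => base_case
  | (N+1) => step_full N (Sall N)

/-- Discrete Wronskian composition identity: for functions `f₁,…,fₙ`
(here `n+1` functions with `f₁ = f 0` nowhere zero) and `h₁,…,hₘ` (here `m+1` functions),
`Wr( Wr(f₁,…,fₙ,h₁),…, Wr(f₁,…,fₙ,hₘ) )(x)
  = (∏_{s=0}^{m-2} Wr(Tf₁,…,Tfₙ)(x+s)) · Wr(f₁,…,fₙ,h₁,…,hₘ)(x)`. -/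
theorem stmt11 {n m : ℕ} (f : Fin (n + 1) → ℂ → ℂ) (h : Fin (m + 1) → ℂ → ℂ)
    (hf : ∀ x, f 0 x ≠ 0) (x : ℂ) :
    dWr (fun (i : Fin (m + 1)) (y : ℂ) => dWr (Fin.snoc f (h i)) y) x =
      (∏ s ∈ Finset.range m, dWr (fun j y => f j (y + 1)) (x + (s : ℕ))) *
        dWr (Fin.append f h) x := by
  have key := Sall (n+1) m (fun i k => f i (x + (k:ℕ))) (fun i k => h i (x + (k:ℕ))) 0
  have e1 : dWr (fun (i : Fin (m + 1)) (y : ℂ) => dWr (Fin.snoc f (h i)) y) x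
      = dWs (fun (i : Fin (m+1)) s =>
          dWs (Fin.snoc (fun i k => f i (x + (k:ℕ))) (fun k => h i (x + (k:ℕ)))) s) 0 := by
    rw [dWr, dWs]
    apply congrArg Matrix.det
    ext i j
    simp only [Matrix.of_apply]
    rw [dWr, dWs]
    apply congrArg Matrix.det
    ext i' j'
    simp only [Matrix.of_apply]
    induction i' using Fin.lastCases with
    | last =>
        rw [Fin.snoc_last, Fin.snoc_last]
        congr 1; push_cast; ring
    | cast j'' =>
        rw [Fin.snoc_castSucc, Fin.snoc_castSucc]
        congr 1; push_cast; ring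
  have e2 : ∀ s ∈ range m, dWr (fun j y => f j (y + 1)) (x + (s : ℕ))
      = dWs (fun (j : Fin (n+1)) s' => f j (x + ((s'+1:ℕ):ℂ))) (0 + s) := by
    intro s _
    rw [dWr, dWs]
    apply congrArg Matrix.det
    ext i j
    simp only [Matrix.of_apply]
    congr 1; push_cast; ring
  have e3 : dWr (Fin.append f h) x
      = dWs (Fin.append (fun i k => f i (x + (k:ℕ))) (fun i k => h i (x + (k:ℕ)))) 0 := by
    rw [dWr, dWs]
    apply congrArg Matrix.det
    ext i j
    simp only [Matrix.of_apply]
    induction i using Fin.addCases with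
    | left j'' =>
        rw [Fin.append_left, Fin.append_left]
        congr 1; push_cast; ring
    | right j'' =>
        rw [Fin.append_right, Fin.append_right]
        congr 1; push_cast; ring
  rw [e1, Finset.prod_congr rfl e2, e3, key]
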